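/- Let $\hat a$ be a bounded measurable complex-valued function on $[0,2\pi)$ and $A = \mathcal{F}^{-1} M_{\hat a} \mathcal{F}$ on $\ell^2(\mathbb{Z})$. Then for every $n \ge 1$ and $k \in \{0,\ldots,n-1\}$, the diagonal entries of the discrete-Fourier-conjugated compression satisfy $(\mathcal{F}_n V_n^* A V_n \mathcal{F}_n^*)_{k,k} = (\widehat S_n \hat a)(2\pi k/n)$, where $\widehat S_n \hat a$ is the $n$-th Cesàro mean of the Fourier partial sums of $\hat a$. -/

import Mathlib

open MeasureTheory Finset Matrix

/-- Lebesgue measure restricted to `[0, 2π)`. -/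
noncomputable def μ2π : Measure ℝ := volume.restrict (Set.Ico 0 (2 * Real.pi))

/-- The `n×n` compression matrix `(V_n^* A V_n)_{j,l} = ⟨1_{j}, A 1_{l}⟩`. -/
noncomputable def compressMat (A : lp (fun _ : ℤ => ℂ) 2 →L[ℂ] lp (fun _ : ℤ => ℂ) 2)
    (n : ℕ) : Matrix (Fin n) (Fin n) ℂ :=
  fun j l => inner ℂ (lp.single 2 (j : ℤ) (1 : ℂ)) (A (lp.single 2 (l : ℤ) (1 : ℂ)))

/-- The `n`-dimensional discrete Fourier transform matrix. -/
noncomputable def dftMat (n : ℕ) : Matrix (Fin n) (Fin n) ℂ :=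
  fun j k => Complex.exp (2 * Real.pi * Complex.I * j * k / n) / Real.sqrt n

lemma sum_range_shift (g : ℤ → ℂ) (n : ℕ) (c : ℤ) :
    ∑ j ∈ Finset.range n, g ((j:ℤ) + c) = ∑ m ∈ Finset.Icc c ((n:ℤ) + c - 1), g m := by
  induction n with
  | zero => simp
  | succ n ih =>
    rw [Finset.sum_range_succ, ih]
    have h : Finset.Icc c (((n:ℕ)+1:ℕ) + c - 1) = insert ((n:ℤ)+c) (Finset.Icc c ((n:ℤ)+c-1)) := by
      ext x; simp only [Finset.mem_Icc, Finset.mem_insert]; push_cast; omega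
    rw [h, Finset.sum_insert (by simp only [Finset.mem_Icc]; omega)]
    ring

lemma key_comb (g : ℤ → ℂ) (n : ℕ) :
    ∑ j ∈ Finset.range n, ∑ l ∈ Finset.range n, g ((j:ℤ) - l)
      = ∑ m ∈ Finset.Icc (-(n:ℤ)+1) ((n:ℤ)-1), ((n:ℤ) - |m|) * g m := by
  induction n with
  | zero => simp
  | succ n ih =>
    have step1 : ∑ j ∈ Finset.range (n+1), ∑ l ∈ Finset.range (n+1), g ((j:ℤ) - l)
        = (∑ j ∈ Finset.range n, ∑ l ∈ Finset.range n, g ((j:ℤ) - l))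
          + ((∑ j ∈ Finset.range n, g ((j:ℤ) - n))
          + ((∑ l ∈ Finset.range n, g ((n:ℤ) - l)) + g 0)) := by
      simp only [Finset.sum_range_succ, Finset.sum_add_distrib, sub_self]
      ring
    have neg_part : ∑ j ∈ Finset.range n, g ((j:ℤ) - n) = ∑ m ∈ Finset.Icc (-(n:ℤ)) (-1), g m := by
      have := sum_range_shift g n (-(n:ℤ))
      simpa [sub_eq_add_neg] using this
    have pos_part : ∑ l ∈ Finset.range n, g ((n:ℤ) - l) = ∑ m ∈ Finset.Icc 1 (n:ℤ), g m := by
      rw [← Finset.sum_range_reflect]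
      have h2 : ∀ l ∈ Finset.range n, g ((n:ℤ) - (n - 1 - l : ℕ)) = g ((l:ℤ) + 1) := by
        intro l hl
        simp only [Finset.mem_range] at hl
        congr 1
        have : ((n - 1 - l : ℕ) : ℤ) = (n:ℤ) - 1 - l := by omega
        rw [this]; ring
      rw [Finset.sum_congr rfl h2, sum_range_shift]
      have : (n:ℤ) + 1 - 1 = n := by ring
      rw [this]
    have extra : (∑ m ∈ Finset.Icc (-(n:ℤ)) (-1), g m) + ((∑ m ∈ Finset.Icc 1 (n:ℤ), g m) + g 0)
        = ∑ m ∈ Finset.Icc (-(n:ℤ)) (n:ℤ), g m := by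
      have h1 : Finset.Icc (-(n:ℤ)) (n:ℤ)
          = (Finset.Icc (-(n:ℤ)) (-1)) ∪ (insert 0 (Finset.Icc 1 (n:ℤ))) := by
        ext x; simp only [Finset.mem_Icc, Finset.mem_union, Finset.mem_insert]; omega
      rw [h1, Finset.sum_union (by
        rw [Finset.disjoint_left]; intro x hx hx'
        simp only [Finset.mem_Icc, Finset.mem_insert] at hx hx'; omega),
        Finset.sum_insert (by simp only [Finset.mem_Icc]; omega)]
      ring
    rw [step1, ih, neg_part, pos_part]
    rw [show (-(((n:ℕ)+1:ℕ):ℤ)+1) = -(n:ℤ) from by push_cast; ring,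
        show ((((n:ℕ)+1:ℕ):ℤ)-1) = (n:ℤ) from by push_cast; ring]
    have split : ∀ m ∈ Finset.Icc (-(n:ℤ)) (n:ℤ),
        (((((n:ℕ)+1:ℕ):ℤ) - |m|) : ℂ) * g m = (((n:ℤ) - |m| : ℤ) : ℂ) * g m + g m := by
      intro m hm; push_cast; ring
    rw [Finset.sum_congr rfl split, Finset.sum_add_distrib]
    have hsub : Finset.Icc (-(n:ℤ)+1) ((n:ℤ)-1) ⊆ Finset.Icc (-(n:ℤ)) (n:ℤ) :=
      Finset.Icc_subset_Icc (by omega) (by omega)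
    have hzero : ∀ x ∈ Finset.Icc (-(n:ℤ)) (n:ℤ), x ∉ Finset.Icc (-(n:ℤ)+1) ((n:ℤ)-1) →
        (((n:ℤ) - |x| : ℤ) : ℂ) * g x = 0 := by
      intro x hx hx'
      simp only [Finset.mem_Icc] at hx hx'
      have : |x| = (n:ℤ) := by rcases abs_cases x with ⟨h,_⟩|⟨h,_⟩ <;> omega
      rw [this]; simp
    rw [← Finset.sum_subset hsub hzero, ← extra]
    push_cast
    ring

theorem dft_diagonal_of_compression_eq_cesaro_mean
    (a : ℝ → ℂ) (ha_meas : Measurable a) (ha_bdd : ∃ C, ∀ x, ‖a x‖ ≤ C)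
    (F : lp (fun _ : ℤ => ℂ) 2 ≃ₗᵢ[ℂ] Lp ℂ 2 μ2π)
    (hF : ∀ k : ℤ, (F (lp.single 2 k (1 : ℂ)) : ℝ → ℂ)
      =ᵐ[μ2π] fun x => Complex.exp (Complex.I * k * x) / Real.sqrt (2 * Real.pi))
    (A : lp (fun _ : ℤ => ℂ) 2 →L[ℂ] lp (fun _ : ℤ => ℂ) 2)
    (hA : ∀ ψ, (F (A ψ) : ℝ → ℂ) =ᵐ[μ2π] fun x => a x * (F ψ : ℝ → ℂ) x)
    (n : ℕ) (hn : 1 ≤ n) :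
    ∀ k : Fin n,
      (dftMat n * compressMat A n * (dftMat n)ᴴ) k k
        = ∑ m ∈ Finset.Icc (-(n : ℤ) + 1) ((n : ℤ) - 1),
            (((((n : ℝ) - abs (m : ℝ)) / n : ℝ)) : ℂ) *
              Complex.exp (Complex.I * m * ((2 * Real.pi * k / n : ℝ) : ℂ)) *
              ((1 / (2 * (Real.pi : ℂ))) *
                ∫ t, Complex.exp (-Complex.I * m * t) * a t ∂μ2π) := by
  intro k
  set c : ℤ → ℂ := fun m =>
    (1 / (2 * (Real.pi : ℂ))) * ∫ t, Complex.exp (-Complex.I * m * t) * a t ∂μ2π with hc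
  -- Step 1: the entries of the compression matrix are Fourier coefficients
  have hsπ : ((Real.sqrt (2*Real.pi) : ℝ) : ℂ) * ((Real.sqrt (2*Real.pi) : ℝ) : ℂ)
      = 2 * (Real.pi : ℂ) := by
    rw [← Complex.ofReal_mul, Real.mul_self_sqrt (by positivity)]
    push_cast; ring
  have entry : ∀ j l : ℤ,
      (inner ℂ (lp.single 2 j (1:ℂ)) (A (lp.single 2 l (1:ℂ))) : ℂ) = c (j - l) := by
    intro j l
    rw [← F.inner_map_map (lp.single 2 j (1:ℂ)) (A (lp.single 2 l (1:ℂ)))]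
    rw [MeasureTheory.L2.inner_def]
    have hae : (fun x => (inner ℂ ((F (lp.single 2 j (1:ℂ)) : ℝ → ℂ) x)
          ((F (A (lp.single 2 l (1:ℂ))) : ℝ → ℂ) x) : ℂ))
        =ᵐ[μ2π] fun x => (1 / (2 * (Real.pi : ℂ))) *
          (Complex.exp (-Complex.I * (j - l : ℤ) * x) * a x) := by
      filter_upwards [hF j, hA (lp.single 2 l (1:ℂ)), hF l] with x h1 h2 h3
      rw [RCLike.inner_apply', h1, h2, h3]
      have hconj : (starRingEnd ℂ) (Complex.exp (Complex.I * (j:ℂ) * (x:ℂ)))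
          = Complex.exp (-Complex.I * (j:ℂ) * (x:ℂ)) := by
        rw [← Complex.exp_conj]
        congr 1
        simp only [_root_.map_mul, Complex.conj_I, Complex.conj_ofReal, map_intCast]
      rw [map_div₀, hconj, Complex.conj_ofReal]
      have hexp : Complex.exp (-Complex.I * (j:ℂ) * (x:ℂ)) * Complex.exp (Complex.I * (l:ℂ) * (x:ℂ))
          = Complex.exp (-Complex.I * ((j - l : ℤ):ℂ) * (x:ℂ)) := by
        rw [← Complex.exp_add]
        congr 1
        push_cast
        ring
      calc Complex.exp (-Complex.I * (j:ℂ) * (x:ℂ)) / ((Real.sqrt (2*Real.pi) : ℝ) : ℂ)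
          * (a x * (Complex.exp (Complex.I * (l:ℂ) * (x:ℂ)) / ((Real.sqrt (2*Real.pi) : ℝ) : ℂ)))
          = (Complex.exp (-Complex.I * (j:ℂ) * (x:ℂ)) * Complex.exp (Complex.I * (l:ℂ) * (x:ℂ)))
            * a x / (((Real.sqrt (2*Real.pi) : ℝ) : ℂ) * ((Real.sqrt (2*Real.pi) : ℝ) : ℂ)) := by
            ring
        _ = Complex.exp (-Complex.I * ((j - l : ℤ):ℂ) * (x:ℂ)) * a x / (2 * (Real.pi : ℂ)) := by
            rw [hexp, hsπ]
        _ = 1 / (2 * (Real.pi : ℂ)) * (Complex.exp (-Complex.I * ((j - l : ℤ):ℂ) * (x:ℂ)) * a x) := by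
            ring
    rw [integral_congr_ae hae, MeasureTheory.integral_const_mul]
  -- Step 2: expand the matrix product
  have hs : ((Real.sqrt n : ℝ) : ℂ) * ((Real.sqrt n : ℝ) : ℂ) = (n : ℂ) := by
    rw [← Complex.ofReal_mul, Real.mul_self_sqrt (by positivity)]
    push_cast; ring
  set g : ℤ → ℂ := fun m =>
    Complex.exp (2 * (Real.pi:ℂ) * Complex.I * (k:ℂ) * (m:ℂ) / (n:ℂ)) * c m / (n:ℂ) with hg
  have expand : (dftMat n * compressMat A n * (dftMat n)ᴴ) k k
      = ∑ j : Fin n, ∑ l : Fin n, g ((j:ℤ) - (l:ℤ)) := by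
    rw [Matrix.mul_apply]
    simp only [Matrix.conjTranspose_apply, Matrix.mul_apply, Finset.sum_mul]
    rw [Finset.sum_comm]
    refine Finset.sum_congr rfl fun j _ => Finset.sum_congr rfl fun l _ => ?_
    rw [compressMat]
    rw [entry (j:ℤ) (l:ℤ)]
    simp only [dftMat, Matrix.of_apply]
    have hconj : star (Complex.exp (2 * (Real.pi:ℂ) * Complex.I * (k:ℂ) * (l:ℂ) / (n:ℂ)) / ((Real.sqrt n : ℝ) : ℂ))
        = Complex.exp (-(2 * (Real.pi:ℂ) * Complex.I * (k:ℂ) * (l:ℂ) / (n:ℂ))) / ((Real.sqrt n : ℝ) : ℂ) := by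
      show (starRingEnd ℂ) _ = _
      rw [map_div₀, ← Complex.exp_conj, Complex.conj_ofReal]
      congr 2
      simp only [map_div₀, _root_.map_mul, Complex.conj_I, Complex.conj_ofReal,
        Complex.conj_natCast, map_ofNat]
      ring
    rw [hconj]
    have hexp : Complex.exp (2 * (Real.pi:ℂ) * Complex.I * (k:ℂ) * (j:ℂ) / (n:ℂ))
        * Complex.exp (-(2 * (Real.pi:ℂ) * Complex.I * (k:ℂ) * (l:ℂ) / (n:ℂ)))
        = Complex.exp (2 * (Real.pi:ℂ) * Complex.I * (k:ℂ) * (((j:ℤ) - (l:ℤ) : ℤ):ℂ) / (n:ℂ)) := by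
      rw [← Complex.exp_add]
      congr 1
      push_cast
      ring
    rw [hg]
    calc Complex.exp (2 * (Real.pi:ℂ) * Complex.I * (k:ℂ) * (j:ℂ) / (n:ℂ)) / ((Real.sqrt n : ℝ) : ℂ)
          * c ((j:ℤ) - (l:ℤ))
          * (Complex.exp (-(2 * (Real.pi:ℂ) * Complex.I * (k:ℂ) * (l:ℂ) / (n:ℂ))) / ((Real.sqrt n : ℝ) : ℂ))
        = (Complex.exp (2 * (Real.pi:ℂ) * Complex.I * (k:ℂ) * (j:ℂ) / (n:ℂ))
            * Complex.exp (-(2 * (Real.pi:ℂ) * Complex.I * (k:ℂ) * (l:ℂ) / (n:ℂ))))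
            * c ((j:ℤ) - (l:ℤ)) / (((Real.sqrt n : ℝ) : ℂ) * ((Real.sqrt n : ℝ) : ℂ)) := by ring
      _ = Complex.exp (2 * (Real.pi:ℂ) * Complex.I * (k:ℂ) * (((j:ℤ) - (l:ℤ) : ℤ):ℂ) / (n:ℂ))
            * c ((j:ℤ) - (l:ℤ)) / (n:ℂ) := by rw [hexp, hs]
  rw [expand]
  have hfin : ∑ j : Fin n, ∑ l : Fin n, g ((j:ℤ) - (l:ℤ))
      = ∑ j ∈ Finset.range n, ∑ l ∈ Finset.range n, g ((j:ℤ) - (l:ℤ)) := by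
    rw [← Fin.sum_univ_eq_sum_range (fun j => ∑ l ∈ Finset.range n, g ((j:ℤ) - (l:ℤ)))]
    refine Finset.sum_congr rfl fun j _ => ?_
    rw [← Fin.sum_univ_eq_sum_range (fun l => g ((j:ℤ) - (l:ℤ)))]
  rw [hfin, key_comb]
  have hcmAll : ∀ m : ℤ, (1 / (2 * (Real.pi : ℂ))) *
      (∫ t, Complex.exp (-Complex.I * m * t) * a t ∂μ2π) = c m := fun m => rfl
  have hgm : ∀ m : ℤ, g m
      = Complex.exp (2 * (Real.pi:ℂ) * Complex.I * (k:ℂ) * (m:ℂ) / (n:ℂ)) * c m / (n:ℂ) :=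
    fun m => rfl
  clear_value c g
  refine Finset.sum_congr rfl fun m hm => ?_
  have habs : ((|(m:ℝ)| : ℝ) : ℂ) = ((|m| : ℤ) : ℂ) := by
    rw [← Int.cast_abs]
    exact Complex.ofReal_intCast _
  have hcoef : ((((n : ℝ) - |(m : ℝ)|) / n : ℝ) : ℂ) = (((n:ℤ) - |m| : ℤ) : ℂ) / (n:ℂ) := by
    rw [Complex.ofReal_div, Complex.ofReal_sub, habs]
    push_cast
    ring
  have hexp2 : Complex.exp (2 * (Real.pi:ℂ) * Complex.I * (k:ℂ) * (m:ℂ) / (n:ℂ))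
      = Complex.exp (Complex.I * (m:ℂ) * ((2 * Real.pi * (k:ℕ) / n : ℝ) : ℂ)) := by
    congr 1
    push_cast
    ring
  rw [hcmAll m, hgm m, hexp2, hcoef]
  push_cast
  ring
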